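/- The function g has a unique minimizer (c₁*, c₂*) on D. Moreover: if a* = 0 then c₁* = 0; and if a* > 0, then c₁* = 0 if and only if β ≥ β_max. -/

import Mathlib

open Set Filter Topology



section aux

variable {H H' : ℝ → ℝ} {astar : ℝ}

/-- limit helper: if `f s ≤ c` on `Ioo a b` then `f x ≤ c` for `x ∈ Icc a b`,
given `f` continuous on `Ici 0` and `0 ≤ a < b`. -/
lemma aux_lim_le {f : ℝ → ℝ} (hf : ContinuousOn f (Set.Ici 0)) {a b x c : ℝ}
    (ha : 0 ≤ a) (hab : a < b) (hx : x ∈ Set.Icc a b)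
    (h : ∀ s ∈ Set.Ioo a b, f s ≤ c) : f x ≤ c := by
  have hsub : Set.Ioo a b ⊆ Set.Ici 0 := fun s hs => le_of_lt (lt_of_le_of_lt ha hs.1)
  have hne : (𝓝[Set.Ioo a b] x).NeBot := by
    rw [← mem_closure_iff_nhdsWithin_neBot, closure_Ioo hab.ne]
    exact hx
  have hcx : ContinuousWithinAt f (Set.Ici 0) x := hf x (le_trans ha hx.1)
  have ht : Filter.Tendsto f (𝓝[Set.Ioo a b] x) (𝓝 (f x)) :=
    hcx.mono_left (nhdsWithin_mono _ hsub)
  refine le_of_tendsto ht ?_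
  filter_upwards [self_mem_nhdsWithin] with s hs using h s hs

lemma aux_lim_ge {f : ℝ → ℝ} (hf : ContinuousOn f (Set.Ici 0)) {a b x c : ℝ}
    (ha : 0 ≤ a) (hab : a < b) (hx : x ∈ Set.Icc a b)
    (h : ∀ s ∈ Set.Ioo a b, c ≤ f s) : c ≤ f x := by
  have := aux_lim_le (f := fun t => -f t) (hf.neg) ha hab hx (c := -c)
    (fun s hs => neg_le_neg (h s hs))
  simpa using this

lemma anti_Icc (hH'cont : ContinuousOn H' (Set.Ici 0)) (hastar : 0 ≤ astar)
    (hH'dec : StrictAntiOn H' (Set.Ioo 0 astar)) :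
    StrictAntiOn H' (Set.Icc 0 astar) := by
  intro x hx y hy hxy
  set t := (2*x + y)/3 with ht
  set t' := (x + 2*y)/3 with ht'
  have hxt : x < t := by rw [ht]; linarith
  have htt' : t < t' := by rw [ht, ht']; linarith
  have ht'y : t' < y := by rw [ht']; linarith
  have htm : t ∈ Set.Ioo 0 astar := ⟨lt_of_le_of_lt hx.1 hxt, lt_of_lt_of_le (htt'.trans ht'y) hy.2⟩
  have ht'm : t' ∈ Set.Ioo 0 astar := ⟨htm.1.trans htt', lt_of_lt_of_le ht'y hy.2⟩
  have h1 : H' t ≤ H' x := by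
    refine aux_lim_ge hH'cont hx.1 hxt ⟨le_refl x, le_of_lt hxt⟩ (fun s hs => ?_)
    exact le_of_lt (hH'dec ⟨lt_of_le_of_lt hx.1 hs.1, hs.2.trans htm.2⟩ htm hs.2)
  have h2 : H' t' < H' t := hH'dec htm ht'm htt'
  have h3 : H' y ≤ H' t' := by
    refine aux_lim_le hH'cont (le_of_lt ht'm.1) ht'y ⟨le_of_lt ht'y, le_refl y⟩ (fun s hs => ?_)
    exact le_of_lt (hH'dec ht'm ⟨ht'm.1.trans hs.1, lt_of_lt_of_le hs.2 hy.2⟩ hs.1)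
  linarith

lemma mono_Ici (hH'cont : ContinuousOn H' (Set.Ici 0)) (hastar : 0 ≤ astar)
    (hH'inc : StrictMonoOn H' (Set.Ioi astar)) :
    StrictMonoOn H' (Set.Ici astar) := by
  intro x hx y hy hxy
  set t := (x + y)/2 with ht
  have hxt : x < t := by rw [ht]; linarith
  have hty : t < y := by rw [ht]; linarith
  have htm : t ∈ Set.Ioi astar := lt_of_le_of_lt hx hxt
  have h1 : H' x ≤ H' t := by
    refine aux_lim_le hH'cont (le_trans hastar hx) hxt ⟨le_refl x, le_of_lt hxt⟩ (fun s hs => ?_)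
    exact le_of_lt (hH'inc (lt_of_le_of_lt hx hs.1) htm hs.2)
  have h2 : H' t < H' y := hH'inc htm (htm.trans hty) hty
  linarith

end aux

section aux2
variable {H H' : ℝ → ℝ}

lemma phi_hasDeriv (hHderiv : ∀ x ∈ Set.Ioi (0:ℝ), HasDerivAt H (H' x) x)
    (m : ℝ) {t : ℝ} (ht : 0 < t) :
    HasDerivAt (fun y => H y - m * y) (H' t - m) t := by
  have h1 : HasDerivAt (fun y : ℝ => m * y) (m * 1) t := (hasDerivAt_id t).const_mul m
  have h2 := (hHderiv t ht).sub h1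
  rw [mul_one] at h2
  exact h2

lemma phi_cont (hHcont : ContinuousOn H (Set.Ici 0)) (m : ℝ) {s : Set ℝ}
    (hs : s ⊆ Set.Ici 0) : ContinuousOn (fun y => H y - m * y) s :=
  (hHcont.mono hs).sub ((continuous_const.mul continuous_id).continuousOn)

lemma phi_deriv_eq (hHderiv : ∀ x ∈ Set.Ioi (0:ℝ), HasDerivAt H (H' x) x)
    (m : ℝ) {t : ℝ} (ht : 0 < t) :
    deriv (fun y => H y - m * y) t = H' t - m := (phi_hasDeriv hHderiv m ht).deriv

lemma phi_mono (hHcont : ContinuousOn H (Set.Ici 0))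
    (hHderiv : ∀ x ∈ Set.Ioi (0:ℝ), HasDerivAt H (H' x) x)
    {m x y : ℝ} (hx : 0 ≤ x) (hxy : x ≤ y)
    (h : ∀ t ∈ Set.Ioo x y, m ≤ H' t) :
    H x - m * x ≤ H y - m * y := by
  have hIcc : Set.Icc x y ⊆ Set.Ici 0 := fun t ht => le_trans hx ht.1
  have := monotoneOn_of_deriv_nonneg (convex_Icc x y) (phi_cont hHcont m hIcc)
    (fun t ht => by
      rw [interior_Icc] at ht
      exact ((phi_hasDeriv hHderiv m (lt_of_le_of_lt hx ht.1)).differentiableAt).differentiableWithinAt)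
    (fun t ht => by
      rw [interior_Icc] at ht
      rw [phi_deriv_eq hHderiv m (lt_of_le_of_lt hx ht.1)]
      linarith [h t ht])
  exact this ⟨le_refl x, hxy⟩ ⟨hxy, le_refl y⟩ hxy

lemma phi_anti (hHcont : ContinuousOn H (Set.Ici 0))
    (hHderiv : ∀ x ∈ Set.Ioi (0:ℝ), HasDerivAt H (H' x) x)
    {m x y : ℝ} (hx : 0 ≤ x) (hxy : x ≤ y)
    (h : ∀ t ∈ Set.Ioo x y, H' t ≤ m) :
    H y - m * y ≤ H x - m * x := by
  have hIcc : Set.Icc x y ⊆ Set.Ici 0 := fun t ht => le_trans hx ht.1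
  have := antitoneOn_of_deriv_nonpos (convex_Icc x y) (phi_cont hHcont m hIcc)
    (fun t ht => by
      rw [interior_Icc] at ht
      exact ((phi_hasDeriv hHderiv m (lt_of_le_of_lt hx ht.1)).differentiableAt).differentiableWithinAt)
    (fun t ht => by
      rw [interior_Icc] at ht
      rw [phi_deriv_eq hHderiv m (lt_of_le_of_lt hx ht.1)]
      linarith [h t ht])
  exact this ⟨le_refl x, hxy⟩ ⟨hxy, le_refl y⟩ hxy

lemma phi_smono (hHcont : ContinuousOn H (Set.Ici 0))
    (hHderiv : ∀ x ∈ Set.Ioi (0:ℝ), HasDerivAt H (H' x) x)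
    {m x y : ℝ} (hx : 0 ≤ x) (hxy : x < y)
    (h : ∀ t ∈ Set.Ioo x y, m < H' t) :
    H x - m * x < H y - m * y := by
  have hIcc : Set.Icc x y ⊆ Set.Ici 0 := fun t ht => le_trans hx ht.1
  have := strictMonoOn_of_deriv_pos (convex_Icc x y) (phi_cont hHcont m hIcc)
    (fun t ht => by
      rw [interior_Icc] at ht
      rw [phi_deriv_eq hHderiv m (lt_of_le_of_lt hx ht.1)]
      linarith [h t ht])
  exact this ⟨le_refl x, le_of_lt hxy⟩ ⟨le_of_lt hxy, le_refl y⟩ hxy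

lemma Hmono (hHcont : ContinuousOn H (Set.Ici 0))
    (hHderiv : ∀ x ∈ Set.Ioi (0:ℝ), HasDerivAt H (H' x) x)
    (hH'pos : ∀ x ∈ Set.Ioi (0:ℝ), 0 < H' x) :
    StrictMonoOn H (Set.Ici 0) := by
  have := strictMonoOn_of_deriv_pos (convex_Ici 0) hHcont
    (fun t ht => by
      rw [interior_Ici] at ht
      rw [(hHderiv t ht).deriv]
      exact hH'pos t ht)
  exact this
end aux2
section aux3

lemma minimizer_facts
    (H H' : ℝ → ℝ)
    (hHcont : ContinuousOn H (Set.Ici 0))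
    (hHderiv : ∀ x ∈ Set.Ioi (0:ℝ), HasDerivAt H (H' x) x)
    (hH'pos : ∀ x ∈ Set.Ioi (0:ℝ), 0 < H' x)
    (hH'cont : ContinuousOn H' (Set.Ici 0))
    (β : ℝ) (hβ : 0 < β)
    (astar : ℝ) (hastar : 0 ≤ astar)
    (hH'dec : StrictAntiOn H' (Set.Ioo 0 astar))
    (hH'inc : StrictMonoOn H' (Set.Ioi astar))
    (c₁ c₂ : ℝ) (h1 : 0 ≤ c₁) (h2 : c₁ + β < c₂)
    (hmin : ∀ d₁ d₂ : ℝ, 0 ≤ d₁ → d₁ + β < d₂ →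
      (H c₂ - H c₁) / (c₂ - c₁ - β) ≤ (H d₂ - H d₁) / (d₂ - d₁ - β)) :
    0 < (H c₂ - H c₁) / (c₂ - c₁ - β) ∧
    H' c₂ = (H c₂ - H c₁) / (c₂ - c₁ - β) ∧
    astar < c₂ ∧
    (c₁ = 0 ∨ (0 < c₁ ∧ c₁ < astar ∧ H' c₁ = (H c₂ - H c₁) / (c₂ - c₁ - β) ∧
        (H c₂ - H c₁) / (c₂ - c₁ - β) < H' 0)) ∧
    (c₁ = 0 → H' 0 ≤ (H c₂ - H c₁) / (c₂ - c₁ - β)) := by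
  set m := (H c₂ - H c₁) / (c₂ - c₁ - β) with hm
  have hden : 0 < c₂ - c₁ - β := by linarith
  have hc₂pos : 0 < c₂ := by linarith
  have hAnti := anti_Icc hH'cont hastar hH'dec
  have hMono := mono_Ici hH'cont hastar hH'inc
  have hnum : 0 < H c₂ - H c₁ :=
    sub_pos.2 (Hmono hHcont hHderiv hH'pos h1 (le_of_lt hc₂pos) (by linarith))
  have hm0 : 0 < m := div_pos hnum hden
  have hF3 : H c₂ - H c₁ = m * (c₂ - c₁ - β) := (div_mul_cancel₀ _ (ne_of_gt hden)).symm
  have hF3' : H c₂ - m * c₂ = (H c₁ - m * c₁) - m * β := by nlinarith [hF3]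
  have hmβ : 0 < m * β := mul_pos hm0 hβ
  -- F1 : φ has global min at c₂ on (c₁+β, ∞)
  have hF1 : ∀ d₂, c₁ + β < d₂ → H c₂ - m * c₂ ≤ H d₂ - m * d₂ := by
    intro d₂ hd₂
    have hin := hmin c₁ d₂ h1 hd₂
    have hdden : 0 < d₂ - c₁ - β := by linarith
    have hin2 : m * (d₂ - c₁ - β) ≤ H d₂ - H c₁ := (le_div_iff₀ hdden).1 hin
    nlinarith [hin2]
  -- F2 : φ has global max at c₁ on [0, c₂ - β)
  have hF2 : ∀ d₁, 0 ≤ d₁ → d₁ + β < c₂ → H d₁ - m * d₁ ≤ H c₁ - m * c₁ := by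
    intro d₁ hd₁0 hd₁
    have hin := hmin d₁ c₂ hd₁0 hd₁
    have hdden : 0 < c₂ - d₁ - β := by linarith
    have hin2 : m * (c₂ - d₁ - β) ≤ H c₂ - H d₁ := (le_div_iff₀ hdden).1 hin
    nlinarith [hin2]
  -- first-order condition at c₂
  have hfc₂ : H' c₂ = m := by
    have hlmin : IsLocalMin (fun x => H x - m * x) c₂ := by
      filter_upwards [Ioi_mem_nhds h2] with d hd using hF1 d hd
    have := hlmin.hasDerivAt_eq_zero (phi_hasDeriv hHderiv m hc₂pos)
    linarith
  -- c₂ > astar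
  have hc₂astar : astar < c₂ := by
    by_contra hcon
    push_neg at hcon
    have hsm := phi_smono hHcont hHderiv (m := m) h1 (by linarith : c₁ < c₂)
      (fun t ht => by
        have htmem : t ∈ Set.Icc 0 astar := ⟨le_trans h1 (le_of_lt ht.1), le_trans (le_of_lt ht.2) hcon⟩
        have := hAnti htmem ⟨le_of_lt hc₂pos, hcon⟩ ht.2
        linarith [hfc₂])
    linarith [hF3']
  refine ⟨hm0, hfc₂, hc₂astar, ?_, ?_⟩
  · -- M2
    rcases eq_or_lt_of_le h1 with hc₁0 | hc₁pos
    · exact Or.inl hc₁0.symm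
    · refine Or.inr ⟨hc₁pos, ?_⟩
      have hfc₁ : H' c₁ = m := by
        have hlmax : IsLocalMax (fun x => H x - m * x) c₁ := by
          filter_upwards [Ioo_mem_nhds hc₁pos (by linarith : c₁ < c₂ - β)] with d hd
            using hF2 d (le_of_lt hd.1) (by linarith [hd.2])
        have := hlmax.hasDerivAt_eq_zero (phi_hasDeriv hHderiv m hc₁pos)
        linarith
      have hc₁astar : c₁ < astar := by
        by_contra hcon
        push_neg at hcon
        have hmo := phi_mono hHcont hHderiv (m := m) h1 (by linarith : c₁ ≤ c₂)
          (fun t ht => by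
            have := hMono (le_trans hcon (le_refl c₁) : astar ≤ c₁) (le_trans hcon (le_of_lt ht.1)) ht.1
            linarith [hfc₁])
        linarith [hF3']
      refine ⟨hc₁astar, hfc₁, ?_⟩
      have := hAnti ⟨le_refl 0, hastar⟩ ⟨h1, le_of_lt hc₁astar⟩ hc₁pos
      linarith [hfc₁]
  · -- M3
    intro hc₁0
    subst hc₁0
    by_contra hcon
    push_neg at hcon
    have hc : Filter.Tendsto H' (𝓝[Set.Ici 0] (0:ℝ)) (𝓝 (H' 0)) := hH'cont 0 Set.self_mem_Ici
    have hev : H' ⁻¹' (Set.Ioi m) ∈ 𝓝[Set.Ici 0] (0:ℝ) := hc (Ioi_mem_nhds hcon)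
    have hev' : H' ⁻¹' (Set.Ioi m) ∈ 𝓝[>] (0:ℝ) :=
      nhdsWithin_mono _ Ioi_subset_Ici_self hev
    rw [mem_nhdsGT_iff_exists_Ioo_subset] at hev'
    obtain ⟨b, hb, hsub⟩ := hev'
    set y := min b (c₂ - β) / 2 with hy
    have hb0 : 0 < b := hb
    have hy0 : 0 < y := by
      rw [hy]
      have : 0 < min b (c₂ - β) := lt_min hb0 (by linarith)
      linarith
    have hyb : y < b := by
      rw [hy]
      have h1' := min_le_left b (c₂ - β)
      linarith [min_le_left b (c₂ - β), hb0]
    have hyc : y + β < c₂ := by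
      have := min_le_right b (c₂ - β)
      rw [hy]; linarith
    have hsm := phi_smono hHcont hHderiv (m := m) (le_refl (0:ℝ)) hy0
      (fun t ht => hsub ⟨ht.1, lt_trans ht.2 hyb⟩)
    have := hF2 y (le_of_lt hy0) hyc
    linarith

end aux3
section aux4

lemma exists_minimizer
    (H H' : ℝ → ℝ)
    (hHcont : ContinuousOn H (Set.Ici 0))
    (hHderiv : ∀ x ∈ Set.Ioi (0:ℝ), HasDerivAt H (H' x) x)
    (hH'pos : ∀ x ∈ Set.Ioi (0:ℝ), 0 < H' x)
    (hH'top : Filter.Tendsto H' Filter.atTop Filter.atTop)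
    (β : ℝ) (hβ : 0 < β) :
    ∃ p : ℝ × ℝ, (0 ≤ p.1 ∧ p.1 + β < p.2) ∧
      ∀ d₁ d₂ : ℝ, 0 ≤ d₁ → d₁ + β < d₂ →
        (H p.2 - H p.1) / (p.2 - p.1 - β) ≤ (H d₂ - H d₁) / (d₂ - d₁ - β) := by
  have hHm := Hmono hHcont hHderiv hH'pos
  set m₀ := H (β + 1) - H 0 with hm₀def
  have hm₀ : 0 < m₀ :=
    sub_pos.2 (hHm Set.self_mem_Ici (by simp; linarith) (by linarith))
  -- far-field radius
  obtain ⟨R₁, hR₁⟩ := Filter.eventually_atTop.1 (Filter.tendsto_atTop.1 hH'top (2 * m₀ + 1))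
  set R₀ := max R₁ 0 with hR₀def
  have hR₀0 : 0 ≤ R₀ := le_max_right _ _
  have hR₀ : ∀ x, R₀ ≤ x → 2 * m₀ + 1 ≤ H' x := fun x hx => hR₁ x (le_trans (le_max_left _ _) hx)
  set R := (2 * m₀ + 1) * R₀ + R₀ + β + 1 with hRdef
  have hRβ : β + 1 ≤ R := by
    have : 0 ≤ (2 * m₀ + 1) * R₀ := mul_nonneg (by linarith) hR₀0
    rw [hRdef]; linarith
  have hRR₀ : R₀ ≤ R := by
    have : 0 ≤ (2 * m₀ + 1) * R₀ := mul_nonneg (by linarith) hR₀0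
    rw [hRdef]; linarith
  have hRpos : 0 < R := by linarith
  -- far field bound
  have hfar : ∀ d₁ d₂ : ℝ, 0 ≤ d₁ → d₁ + β < d₂ → R ≤ d₂ →
      m₀ < (H d₂ - H d₁) / (d₂ - d₁ - β) := by
    intro d₁ d₂ hd₁ hd₂ hRd₂
    have hdden : 0 < d₂ - d₁ - β := by linarith
    rw [lt_div_iff₀ hdden]
    rcases le_or_gt R₀ d₁ with hcase | hcase
    · have hphi := phi_mono hHcont hHderiv (m := 2 * m₀ + 1) (le_trans hR₀0 hcase)
        (by linarith : d₁ ≤ d₂) (fun t ht => hR₀ t (le_trans hcase (le_of_lt ht.1)))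
      have hkey : (2 * m₀ + 1) * (d₂ - d₁) ≤ H d₂ - H d₁ := by nlinarith [hphi]
      nlinarith [mul_pos (by linarith : (0:ℝ) < m₀ + 1) (by linarith : (0:ℝ) < d₂ - d₁), mul_pos hm₀ hβ]
    · have hmono1 : H d₁ ≤ H R₀ := by
        rcases eq_or_lt_of_le (le_of_lt hcase : d₁ ≤ R₀) with he | hl
        · rw [he]
        · exact le_of_lt (hHm (Set.mem_Ici.2 hd₁) (Set.mem_Ici.2 hR₀0) hl)
      have hphi := phi_mono hHcont hHderiv (m := 2 * m₀ + 1) hR₀0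
        (le_trans hRR₀ hRd₂) (fun t ht => hR₀ t (le_of_lt ht.1))
      have hkey : (2 * m₀ + 1) * (d₂ - R₀) ≤ H d₂ - H R₀ := by nlinarith [hphi]
      have hd₂R : (2 * m₀ + 1) * R₀ + β + 1 ≤ d₂ := by rw [hRdef] at hRd₂; linarith
      have hd₂pos : 0 < d₂ := by nlinarith
      have h5 : m₀ * (d₂ - d₁ - β) ≤ m₀ * d₂ :=
        mul_le_mul_of_nonneg_left (by linarith) (le_of_lt hm₀)
      nlinarith [mul_nonneg (le_of_lt hm₀) (le_of_lt hd₂pos)]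
  -- near-diagonal bound
  have hCcont : ContinuousOn (fun c => H (c + β) - H c) (Set.Icc 0 R) := by
    refine ContinuousOn.sub ?_ (hHcont.mono (fun t ht => ht.1))
    exact ContinuousOn.comp hHcont (continuous_id.add continuous_const).continuousOn
      (fun t ht => by simp at ht ⊢; linarith [ht.1])
  obtain ⟨c₀, hc₀mem, hc₀min⟩ := isCompact_Icc.exists_isMinOn
    (Set.nonempty_Icc.2 (le_of_lt hRpos)) hCcont
  set δ := H (c₀ + β) - H c₀ with hδdef
  have hδpos : 0 < δ :=
    sub_pos.2 (hHm (Set.mem_Ici.2 hc₀mem.1) (Set.mem_Ici.2 (by linarith [hc₀mem.1])) (by linarith))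
  have hδmin : ∀ c ∈ Set.Icc 0 R, δ ≤ H (c + β) - H c := fun c hc => isMinOn_iff.1 hc₀min c hc
  set ε := min (δ / (m₀ + 1)) 1 with hεdef
  have hε0 : 0 < ε := lt_min (div_pos hδpos (by linarith)) one_pos
  have hε1 : ε ≤ 1 := min_le_right _ _
  have hεδ : ε * (m₀ + 1) ≤ δ := by
    have := min_le_left (δ / (m₀ + 1)) 1
    have h2 : ε ≤ δ / (m₀ + 1) := this
    calc ε * (m₀ + 1) ≤ (δ / (m₀ + 1)) * (m₀ + 1) :=
          mul_le_mul_of_nonneg_right h2 (by linarith)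
      _ = δ := div_mul_cancel₀ _ (by linarith)
  have hnear : ∀ d₁ d₂ : ℝ, 0 ≤ d₁ → d₁ + β < d₂ → d₂ ≤ R → d₂ < d₁ + β + ε →
      m₀ < (H d₂ - H d₁) / (d₂ - d₁ - β) := by
    intro d₁ d₂ hd₁ hd₂ hd₂R hd₂ε
    have hdden : 0 < d₂ - d₁ - β := by linarith
    rw [lt_div_iff₀ hdden]
    have hd₁R : d₁ ∈ Set.Icc 0 R := ⟨hd₁, by linarith⟩
    have hnum1 : δ ≤ H (d₁ + β) - H d₁ := hδmin d₁ hd₁R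
    have hnum2 : H (d₁ + β) ≤ H d₂ :=
      le_of_lt (hHm (Set.mem_Ici.2 (by linarith)) (Set.mem_Ici.2 (by linarith)) hd₂)
    have h6 : m₀ * (d₂ - d₁ - β) < m₀ * ε := mul_lt_mul_of_pos_left (by linarith) hm₀
    nlinarith
  -- compact set K
  let K := {p : ℝ × ℝ | 0 ≤ p.1 ∧ p.1 + β + ε ≤ p.2 ∧ p.2 ≤ R}
  have hKmem : ∀ p : ℝ × ℝ, p ∈ K ↔ (0 ≤ p.1 ∧ p.1 + β + ε ≤ p.2 ∧ p.2 ≤ R) := fun p => Iff.rfl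
  have hKsub : K ⊆ Set.Icc 0 R ×ˢ Set.Icc 0 R := by
    rintro ⟨x, y⟩ ⟨hx, hxy, hyR⟩
    refine ⟨⟨hx, ?_⟩, ⟨by simp at hx ⊢; linarith, hyR⟩⟩
    simp only at *
    linarith
  have hKclosed : IsClosed K := by
    have h1 : IsClosed {p : ℝ × ℝ | 0 ≤ p.1} := isClosed_le continuous_const continuous_fst
    have h2 : IsClosed {p : ℝ × ℝ | p.1 + β + ε ≤ p.2} :=
      isClosed_le ((continuous_fst.add continuous_const).add continuous_const) continuous_snd
    have h3 : IsClosed {p : ℝ × ℝ | p.2 ≤ R} := isClosed_le continuous_snd continuous_const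
    have heq : K = {p : ℝ × ℝ | 0 ≤ p.1} ∩ ({p : ℝ × ℝ | p.1 + β + ε ≤ p.2} ∩ {p : ℝ × ℝ | p.2 ≤ R}) := by
      ext p
      rw [hKmem]
      simp only [Set.mem_inter_iff, Set.mem_setOf_eq]
    rw [heq]
    exact h1.inter (h2.inter h3)
  have hKcomp : IsCompact K := (isCompact_Icc.prod isCompact_Icc).of_isClosed_subset hKclosed hKsub
  have hKne : ((0 : ℝ), β + 1) ∈ K :=
    ⟨le_refl 0, show (0:ℝ) + β + ε ≤ β + 1 by linarith, show β + 1 ≤ R by linarith⟩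
  -- continuity of g on K
  have hgcont : ContinuousOn (fun p : ℝ × ℝ => (H p.2 - H p.1) / (p.2 - p.1 - β)) K := by
    have hKpos : ∀ p ∈ K, (0:ℝ) ≤ p.1 ∧ (0:ℝ) ≤ p.2 := by
      rintro ⟨x, y⟩ ⟨hx, hxy, _⟩
      exact ⟨hx, by simp at hx ⊢; linarith⟩
    refine ContinuousOn.div ?_ ?_ ?_
    · exact (ContinuousOn.comp hHcont continuous_snd.continuousOn
        (fun p hp => (hKpos p hp).2)).sub
        (ContinuousOn.comp hHcont continuous_fst.continuousOn (fun p hp => (hKpos p hp).1))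
    · exact ((continuous_snd.sub continuous_fst).sub continuous_const).continuousOn
    · rintro ⟨x, y⟩ ⟨hx, hxy, _⟩
      simp only at *
      intro hzero
      have : y - x - β = 0 := hzero
      linarith
  obtain ⟨p, hpK, hpmin⟩ := hKcomp.exists_isMinOn ⟨((0:ℝ), β + 1), hKne⟩ hgcont
  obtain ⟨hp1, hp2, hp3⟩ := hpK
  refine ⟨p, ⟨hp1, by linarith⟩, ?_⟩
  have hgval : (H (((0:ℝ), β + 1) : ℝ × ℝ).2 - H (((0:ℝ), β + 1) : ℝ × ℝ).1) /
      ((((0:ℝ), β + 1) : ℝ × ℝ).2 - (((0:ℝ), β + 1) : ℝ × ℝ).1 - β) = m₀ := by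
    simp [hm₀def]
  have hpm₀ : (H p.2 - H p.1) / (p.2 - p.1 - β) ≤ m₀ := by
    have := isMinOn_iff.1 hpmin _ hKne
    rwa [hgval] at this
  intro d₁ d₂ hd₁ hd₂
  by_cases hdK : (d₁, d₂) ∈ K
  · exact isMinOn_iff.1 hpmin _ hdK
  · rcases le_or_gt d₂ R with hd₂R | hd₂R
    · have hd₂ε : d₂ < d₁ + β + ε := by
        by_contra hcon
        push_neg at hcon
        exact hdK ⟨hd₁, hcon, hd₂R⟩
      exact le_of_lt (lt_of_le_of_lt hpm₀ (hnear d₁ d₂ hd₁ hd₂ hd₂R hd₂ε))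
    · exact le_of_lt (lt_of_le_of_lt hpm₀ (hfar d₁ d₂ hd₁ hd₂ (le_of_lt hd₂R)))

end aux4


theorem stmt_15
    (H H' : ℝ → ℝ)
    (hHcont : ContinuousOn H (Set.Ici 0))
    (hHderiv : ∀ x ∈ Set.Ioi (0:ℝ), HasDerivAt H (H' x) x)
    (hH'pos : ∀ x ∈ Set.Ioi (0:ℝ), 0 < H' x)
    (hH'cont : ContinuousOn H' (Set.Ici 0))
    (hH'top : Filter.Tendsto H' Filter.atTop Filter.atTop)
    (β : ℝ) (hβ : 0 < β)
    (astar : ℝ) (hastar : 0 ≤ astar)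
    (hH'dec : StrictAntiOn H' (Set.Ioo 0 astar))
    (hH'inc : StrictMonoOn H' (Set.Ioi astar))
    (hH'conv : ConvexOn ℝ (Set.Ioi 0) H')
    (z₀ βmax : ℝ) (hz₀ : 0 < astar → z₀ ∈ Set.Ioi astar ∧ H' z₀ = H' 0)
    (hβmax : βmax = z₀ - (H z₀ - H 0) / H' 0)
    :
    (∃! p : ℝ × ℝ, (0 ≤ p.1 ∧ p.1 + β < p.2) ∧
      ∀ d₁ d₂ : ℝ, 0 ≤ d₁ → d₁ + β < d₂ →
        (H p.2 - H p.1) / (p.2 - p.1 - β) ≤ (H d₂ - H d₁) / (d₂ - d₁ - β)) ∧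
      ∀ c₁ c₂ : ℝ, 0 ≤ c₁ → c₁ + β < c₂ →
        (∀ d₁ d₂ : ℝ, 0 ≤ d₁ → d₁ + β < d₂ →
          (H c₂ - H c₁) / (c₂ - c₁ - β) ≤ (H d₂ - H d₁) / (d₂ - d₁ - β)) →
        (astar = 0 → c₁ = 0) ∧ (0 < astar → (c₁ = 0 ↔ βmax ≤ β)) := by
  have hAnti := anti_Icc hH'cont hastar hH'dec
  have hMono := mono_Ici hH'cont hastar hH'inc
  have facts := fun (c₁ c₂ : ℝ) (h1 : 0 ≤ c₁) (h2 : c₁ + β < c₂) hmin =>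
    minimizer_facts H H' hHcont hHderiv hH'pos hH'cont β hβ astar hastar hH'dec hH'inc
      c₁ c₂ h1 h2 hmin
  obtain ⟨⟨p₁, p₂⟩, ⟨hp1, hp2⟩, hpmin⟩ :=
    exists_minimizer H H' hHcont hHderiv hH'pos hH'top β hβ
  simp only at hp1 hp2 hpmin
  constructor
  · -- existence and uniqueness
    refine ⟨(p₁, p₂), ⟨⟨hp1, hp2⟩, hpmin⟩, ?_⟩
    rintro ⟨q₁, q₂⟩ ⟨⟨hq1, hq2⟩, hqmin⟩
    simp only at hq1 hq2 hqmin ⊢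
    have hval : (H q₂ - H q₁) / (q₂ - q₁ - β) = (H p₂ - H p₁) / (p₂ - p₁ - β) :=
      le_antisymm (hqmin p₁ p₂ hp1 hp2) (hpmin q₁ q₂ hq1 hq2)
    obtain ⟨hPm0, hPfc₂, hPastar, hPM2, hPM3⟩ := facts p₁ p₂ hp1 hp2 hpmin
    obtain ⟨hQm0, hQfc₂, hQastar, hQM2, hQM3⟩ := facts q₁ q₂ hq1 hq2 hqmin
    rw [hval] at hQm0 hQfc₂ hQM2 hQM3
    have hq₂p₂ : q₂ = p₂ := by
      refine hMono.injOn (Set.mem_Ici.2 (le_of_lt hQastar)) (Set.mem_Ici.2 (le_of_lt hPastar)) ?_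
      rw [hQfc₂, hPfc₂]
    have hq₁p₁ : q₁ = p₁ := by
      rcases hQM2 with hQ0 | ⟨hQpos, hQlt, hQfc₁, hQmlt⟩ <;>
        rcases hPM2 with hP0 | ⟨hPpos, hPlt, hPfc₁, hPmlt⟩
      · rw [hQ0, hP0]
      · exfalso; have := hQM3 hQ0; linarith
      · exfalso; have := hPM3 hP0; linarith
      · refine hAnti.injOn ⟨hq1, le_of_lt hQlt⟩ ⟨hp1, le_of_lt hPlt⟩ ?_
        rw [hQfc₁, hPfc₁]
    rw [hq₁p₁, hq₂p₂]
  · -- characterization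
    intro c₁ c₂ h1 h2 hcmin
    obtain ⟨hm0, hfc₂, hcastar, hM2, hM3⟩ := facts c₁ c₂ h1 h2 hcmin
    constructor
    · intro ha0
      rcases hM2 with h0 | ⟨hc₁pos, hc₁lt, _, _⟩
      · exact h0
      · exfalso; rw [ha0] at hc₁lt; linarith
    · intro hap
      obtain ⟨hz₀mem, hz₀eq⟩ := hz₀ hap
      have hz₀astar : astar < z₀ := hz₀mem
      have hz₀pos : 0 < z₀ := lt_of_le_of_lt hastar hz₀astar
      have hf0pos : 0 < H' 0 := by
        have h1' := hAnti ⟨le_refl 0, hastar⟩ ⟨hastar, le_refl astar⟩ hap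
        have h2' := hH'pos astar hap
        linarith
      have hHz₀ : H 0 < H z₀ :=
        Hmono hHcont hHderiv hH'pos Set.self_mem_Ici (Set.mem_Ici.2 (le_of_lt hz₀pos)) hz₀pos
      have hident : H' 0 * βmax = H' 0 * z₀ - (H z₀ - H 0) := by
        have hc : H' 0 * ((H z₀ - H 0) / H' 0) = H z₀ - H 0 :=
          mul_div_cancel₀ _ (ne_of_gt hf0pos)
        rw [hβmax, mul_sub, hc]
      have hβmaxz₀ : βmax < z₀ := by
        have : 0 < (H z₀ - H 0) / H' 0 := div_pos (by linarith) hf0pos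
        rw [hβmax]; linarith
      constructor
      · -- c₁ = 0 → βmax ≤ β
        intro hc₁0
        by_contra hcon
        push_neg at hcon
        have hfeas : (0:ℝ) + β < z₀ := by linarith
        have hle := hcmin 0 z₀ (le_refl 0) hfeas
        have hlt : (H z₀ - H 0) / (z₀ - 0 - β) < H' 0 := by
          rw [div_lt_iff₀ (by linarith : (0:ℝ) < z₀ - 0 - β)]
          nlinarith [mul_pos hf0pos (by linarith : (0:ℝ) < βmax - β)]
        have := hM3 hc₁0
        linarith
      · -- βmax ≤ β → c₁ = 0
        intro hβge
        rcases hM2 with h0 | ⟨hc₁pos, hc₁astar, hfc₁, hmlt⟩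
        · exact h0
        · exfalso
          have hden : 0 < c₂ - c₁ - β := by linarith
          have hF3 : H c₂ - H c₁ = (H c₂ - H c₁) / (c₂ - c₁ - β) * (c₂ - c₁ - β) :=
            (div_mul_cancel₀ _ (ne_of_gt hden)).symm
          have hA : H c₁ - H' 0 * c₁ ≤ H 0 - H' 0 * 0 := by
            refine phi_anti hHcont hHderiv (le_refl 0) (le_of_lt hc₁pos) (fun t ht => ?_)
            exact le_of_lt (hAnti ⟨le_refl 0, hastar⟩
              ⟨le_of_lt ht.1, le_of_lt (lt_trans ht.2 hc₁astar)⟩ ht.1)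
          have hB : H z₀ - H' 0 * z₀ ≤ H c₂ - H' 0 * c₂ := by
            rcases le_or_gt c₂ z₀ with hcz | hcz
            · refine phi_anti hHcont hHderiv (by linarith : (0:ℝ) ≤ c₂) hcz (fun t ht => ?_)
              have := hMono (Set.mem_Ici.2 (le_of_lt (lt_trans hcastar ht.1)))
                (Set.mem_Ici.2 (le_of_lt hz₀astar)) ht.2
              rw [hz₀eq] at this
              exact le_of_lt this
            · refine phi_mono hHcont hHderiv (le_of_lt hz₀pos) (le_of_lt hcz) (fun t ht => ?_)
              have := hMono (Set.mem_Ici.2 (le_of_lt hz₀astar))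
                (Set.mem_Ici.2 (le_of_lt (lt_trans hz₀astar ht.1))) ht.1
              rw [hz₀eq] at this
              exact le_of_lt this
          have hβineq : H' 0 * βmax ≤ H' 0 * β :=
            mul_le_mul_of_nonneg_left hβge (le_of_lt hf0pos)
          -- H c₂ - H c₁ ≥ H' 0 * (c₂ - c₁ - β)
          have hkey : H' 0 * (c₂ - c₁ - β) ≤ H c₂ - H c₁ := by nlinarith
          have hge : H' 0 ≤ (H c₂ - H c₁) / (c₂ - c₁ - β) := by
            rw [le_div_iff₀ hden]; linarith
          linarith
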